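/- Let n, d, m, t be positive integers such that m < binom(k, ≤ d), where k = ⌊n − log₂ binom(n, ≤ d) − t⌋ is assumed nonnegative. Let x₁, …, x_m be independent random vectors, each uniformly distributed on {-1,1}^n. Then, with probability greater than 1 − 2^{−t}, the vectors x₁^{≤d}, …, x_m^{≤d} ∈ ℝ^{binom(n,≤d)} are linearly independent over ℝ. -/

import Mathlib

/-- The `d`-th power (tensor lift) of a vector `x ∈ ℝⁿ`. -/
def tensorLift (n d : ℕ) (x : Fin n → ℝ) : {I : Finset (Fin n) // I.card ≤ d} → ℝ :=
  fun I => ∏ i ∈ I.1, x i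

/-- The point of the cube `{-1,1}^n` encoded by a vector of signs. -/
def signVec {n : ℕ} (σ : Fin n → Bool) : Fin n → ℝ :=
  fun i => if σ i then 1 else -1

namespace ASW
open Finset Submodule Module Matrix

/-- popcount of a natural number -/
def pc (x : ℕ) : ℕ := x.bitIndices.toFinset.card

/-- number of `x < s` with popcount at most `d` -/
def M (d s : ℕ) : ℕ := ((Finset.range s).filter (fun x => pc x ≤ d)).card

/-- number of `x < s` with popcount exactly `d` -/
def E (d s : ℕ) : ℕ := ((Finset.range s).filter (fun x => pc x = d)).card

lemma pc_zero : pc 0 = 0 := by simp [pc]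

lemma pc_eq_zero {x : ℕ} (h : pc x = 0) : x = 0 := by
  have h2 : x.bitIndices.toFinset = ∅ := Finset.card_eq_zero.mp h
  have := Finset.twoPowSum_toFinset_bitIndices x
  rw [h2] at this
  simpa using this.symm

lemma pc_two_pow_add {a x : ℕ} (h : x < 2 ^ a) : pc (2 ^ a + x) = pc x + 1 := by
  set S := x.bitIndices.toFinset with hS
  have hsum : ∑ i ∈ S, 2 ^ i = x := Finset.twoPowSum_toFinset_bitIndices x
  have ha : a ∉ S := by
    intro hmem
    have := Nat.two_pow_le_of_mem_bitIndices (List.mem_toFinset.mp hmem)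
    omega
  have hins : ∑ i ∈ insert a S, 2 ^ i = 2 ^ a + x := by
    rw [Finset.sum_insert ha, hsum]
  have : (2 ^ a + x).bitIndices.toFinset = insert a S := by
    rw [← hins, Finset.toFinset_bitIndices_twoPowSum]
  rw [pc, this, Finset.card_insert_of_notMem ha, hS]
  rfl

lemma M_mono {d s s' : ℕ} (h : s ≤ s') : M d s ≤ M d s' :=
  Finset.card_le_card (Finset.filter_subset_filter _ (by
    exact Finset.range_subset_range.mpr h))

lemma M_mono_d {d d' s : ℕ} (h : d ≤ d') : M d s ≤ M d' s :=
  Finset.card_le_card (Finset.monotone_filter_right _ (fun x _ hx => le_trans hx h))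

lemma E_mono {d s s' : ℕ} (h : s ≤ s') : E d s ≤ E d s' :=
  Finset.card_le_card (Finset.filter_subset_filter _ (Finset.range_subset_range.mpr h))

lemma M_zero_right (d : ℕ) : M d 0 = 0 := by simp [M]

lemma M_one (d : ℕ) : M d 1 = 1 := by
  rw [M, Finset.range_one]
  rw [Finset.filter_singleton]
  simp [pc_zero]

lemma M_zero_pos {s : ℕ} (h : 1 ≤ s) : M 0 s = 1 := by
  have : (Finset.range s).filter (fun x => pc x ≤ 0) = {0} := by
    ext x
    simp only [Finset.mem_filter, Finset.mem_range, Finset.mem_singleton,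
      Nat.le_zero]
    constructor
    · rintro ⟨-, h2⟩; exact pc_eq_zero h2
    · rintro rfl; exact ⟨h, pc_zero⟩
  rw [M, this, Finset.card_singleton]

lemma M_zero_le_one (s : ℕ) : M 0 s ≤ 1 := by
  rcases Nat.eq_zero_or_pos s with h | h
  · simp [h, M_zero_right]
  · rw [M_zero_pos h]

lemma M_eq_add_E {d s : ℕ} (hd : 1 ≤ d) : M d s = M (d - 1) s + E d s := by
  rw [M, M, E]
  rw [← Finset.card_union_of_disjoint]
  · congr 1
    ext x
    simp only [Finset.mem_union, Finset.mem_filter, Finset.mem_range]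
    constructor
    · rintro ⟨hx, h2⟩
      rcases Nat.lt_or_ge (pc x) d with h3 | h3
      · exact Or.inl ⟨hx, by omega⟩
      · exact Or.inr ⟨hx, by omega⟩
    · rintro (⟨hx, h2⟩ | ⟨hx, h2⟩) <;> exact ⟨hx, by omega⟩
  · rw [Finset.disjoint_filter]
    intro x _ h2
    omega

/-- key recursion -/
lemma M_rec {d a r : ℕ} (hd : 1 ≤ d) (hr : r ≤ 2 ^ a) :
    M d (2 ^ a + r) = M d (2 ^ a) + M (d - 1) r := by
  rw [M, M, M, Finset.range_add, Finset.filter_union, Finset.card_union_of_disjoint]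
  · congr 1
    rw [Finset.filter_map, Finset.card_map]
    apply Finset.card_bij (fun x _ => x)
    · intro x hx
      simp only [Finset.mem_filter, Finset.mem_range] at hx ⊢
      obtain ⟨hx1, hx2⟩ := hx
      have : pc (2 ^ a + x) = pc x + 1 := pc_two_pow_add (lt_of_lt_of_le hx1 hr)
      refine ⟨hx1, ?_⟩
      simp only [Function.comp, addLeftEmbedding_apply] at hx2
      rw [this] at hx2
      omega
    · intro x hx y hy h; exact h
    · intro x hx
      simp only [Finset.mem_filter, Finset.mem_range] at hx
      obtain ⟨hx1, hx2⟩ := hx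
      refine ⟨x, ?_, rfl⟩
      have : pc (2 ^ a + x) = pc x + 1 := pc_two_pow_add (lt_of_lt_of_le hx1 hr)
      simp only [Finset.mem_filter, Finset.mem_range, Function.comp, addLeftEmbedding_apply, this]
      exact ⟨hx1, by omega⟩
  · apply Finset.disjoint_filter_filter
    rw [Finset.disjoint_left]
    intro x hx hy
    simp only [Finset.mem_range] at hx
    simp only [Finset.mem_map, Finset.mem_range, addLeftEmbedding_apply] at hy
    obtain ⟨y, _, rfl⟩ := hy
    omega


lemma sum_choose_succ (a d : ℕ) :
    ∑ i ∈ range (d + 1), (a + 1).choose i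
      = ∑ i ∈ range (d + 1), a.choose i + ∑ i ∈ range d, a.choose i := by
  rw [Finset.sum_range_succ' (fun i => (a + 1).choose i) d]
  simp only [Nat.choose_succ_succ]
  rw [Finset.sum_add_distrib, Nat.choose_zero_right]
  rw [Finset.sum_range_succ' (fun i => a.choose i) d, Nat.choose_zero_right]
  ring

lemma M_two_pow (d a : ℕ) : M d (2 ^ a) = ∑ i ∈ range (d + 1), a.choose i := by
  induction a generalizing d with
  | zero =>
      rw [pow_zero, M_one]
      rw [Finset.sum_eq_single 0]
      · rfl
      · intro i _ hi
        cases i with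
        | zero => exact absurd rfl hi
        | succ j => exact Nat.choose_zero_succ j
      · intro h; exact absurd (Finset.mem_range.mpr (Nat.succ_pos d)) h
  | succ a ih =>
      rcases Nat.eq_zero_or_pos d with rfl | hd
      · rw [M_zero_pos (Nat.one_le_two_pow)]
        simp
      · have h2 : (2:ℕ) ^ (a + 1) = 2 ^ a + 2 ^ a := by ring
        rw [h2, M_rec hd le_rfl, ih d, ih (d-1), sum_choose_succ]
        have h3 : d - 1 + 1 = d := by omega
        rw [h3]

lemma M_subadd : ∀ (N d u v : ℕ), u + v ≤ N → v ≤ u → M d (u + v) ≤ M d u + M (d - 1) v := by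
  intro N
  induction N with
  | zero =>
      intro d u v h hvu
      have : u = 0 ∧ v = 0 := by omega
      simp [this.1, this.2, M_zero_right]
  | succ N ih =>
      intro d u v hN hvu
      rcases Nat.eq_zero_or_pos v with rfl | hv
      · simp [M_zero_right]
      rcases Nat.eq_zero_or_pos d with rfl | hd
      · rw [M_zero_pos (by omega : 1 ≤ u + v)]
        have h1 := M_zero_pos hv
        have h0 : (0:ℕ) - 1 = 0 := rfl
        rw [h0, h1]
        have := M_zero_pos (le_trans hv hvu)
        omega
      have hu : 1 ≤ u := le_trans hv hvu
      set a := Nat.log 2 u with ha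
      have ha1 : 2 ^ a ≤ u := Nat.pow_log_le_self 2 (by omega)
      have ha2 : u < 2 ^ (a + 1) := Nat.lt_pow_succ_log_self (by norm_num) u
      set u' := u - 2 ^ a with hu'
      have hux : u = 2 ^ a + u' := by omega
      have hu'lt : u' < 2 ^ a := by omega
      have hMu : M d u = M d (2 ^ a) + M (d - 1) u' := by
        rw [hux]; exact M_rec hd (by omega)
      rcases le_or_gt (u + v) (2 ^ (a + 1)) with hA | hB
      · -- Case A
        have hr : u' + v ≤ 2 ^ a := by omega
        have hsum : u + v = 2 ^ a + (u' + v) := by omega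
        rw [hsum, M_rec hd hr, hMu]
        have key : M (d - 1) (u' + v) ≤ M (d - 1) u' + M (d - 1) v := by
          rcases le_total v u' with hc | hc
          · exact le_trans (ih (d-1) u' v (by omega) hc)
              (by gcongr; exact M_mono_d (by omega))
          · rw [add_comm u' v]
            exact le_trans (ih (d-1) v u' (by omega) hc)
              (by rw [add_comm (M (d-1) u')]; gcongr; exact M_mono_d (by omega))
        omega
      · -- Case B
        set r := u + v - 2 ^ (a + 1) with hrdef
        have hr1 : 1 ≤ r := by omega
        have hrle : r ≤ 2 ^ (a + 1) := by
          have : u + v ≤ 2 * u := by omega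
          have h2 : (2:ℕ) ^ (a + 1) = 2 * 2 ^ a := by ring
          omega
        have hsum : u + v = 2 ^ (a + 1) + r := by omega
        have hMuv : M d (u + v) = M d (2 ^ a) + M (d - 1) (2 ^ a) + M (d - 1) r := by
          rw [hsum, M_rec hd hrle]
          have : (2:ℕ) ^ (a + 1) = 2 ^ a + 2 ^ a := by ring
          rw [this, M_rec hd le_rfl]
        -- goal reduces to: M (d-1) (2^a) + M (d-1) r ≤ M (d-1) u' + M (d-1) v
        have hgoal : M (d - 1) (2 ^ a) + M (d - 1) r ≤ M (d - 1) u' + M (d - 1) v := by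
          have huv' : u' + v = 2 ^ a + r := by omega
          have hu'pos : 1 ≤ u' := by
            by_contra h
            have : u' = 0 := by omega
            omega
          rcases Nat.eq_zero_or_pos (d - 1) with hd1 | hd1
          · -- d = 1
            rw [hd1, M_zero_pos (Nat.one_le_two_pow), M_zero_pos hr1,
              M_zero_pos hu'pos, M_zero_pos hv]
          · rcases le_or_gt (2 ^ a) v with hB1 | hB2
            · -- B1 : v ≥ 2^a
              set v' := v - 2 ^ a with hv'
              have hvx : v = 2 ^ a + v' := by omega
              have hv'le : v' ≤ 2 ^ a := by
                have : v < 2 ^ (a+1) := by omega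
                have h2 : (2:ℕ) ^ (a + 1) = 2 * 2 ^ a := by ring
                omega
              have hMv : M (d-1) v = M (d-1) (2 ^ a) + M (d-1-1) v' := by
                rw [hvx]; exact M_rec hd1 hv'le
              have hrr : r = u' + v' := by omega
              have hv'u' : v' ≤ u' := by omega
              have := ih (d-1) u' v' (by omega) hv'u'
              rw [hMv, hrr]
              omega
            · -- B2 : v < 2^a
              have hrltv : r < v := by omega
              have hrltu' : r < u' := by omega
              -- wlog p = max u' v, q = min
              obtain ⟨p, q, hpq, hqp, hqr, hperm⟩ : ∃ p q, p + q = u' + v ∧ q ≤ p ∧ r ≤ q ∧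
                  M (d-1) p + M (d-1) q = M (d-1) u' + M (d-1) v := by
                rcases le_total v u' with hc | hc
                · exact ⟨u', v, rfl, hc, by omega, rfl⟩
                · exact ⟨v, u', by omega, hc, by omega, by omega⟩
              have hihq : M (d-1) (p + q) ≤ M (d-1) p + M (d-1-1) q :=
                ih (d-1) p q (by omega) hqp
              have hrec : M (d-1) (p + q) = M (d-1) (2 ^ a) + M (d-1-1) r := by
                rw [hpq, huv']
                exact M_rec hd1 (by omega)
              have hEr : M (d-1) r = M (d-1-1) r + E (d-1) r := M_eq_add_E hd1
              have hEq : M (d-1) q = M (d-1-1) q + E (d-1) q := M_eq_add_E hd1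
              have hEmono : E (d-1) r ≤ E (d-1) q := E_mono hqr
              omega
        omega


/-- subadditivity, convenient form -/
lemma M_subadd' {d u v : ℕ} (h : v ≤ u) : M d (u + v) ≤ M d u + M (d - 1) v :=
  M_subadd (u + v) d u v le_rfl h

variable {α : Type*} [DecidableEq α]

/-- downward closed family counting lemma -/
lemma fam_count : ∀ (N : ℕ) (d : ℕ) (F : Finset (Finset α)), F.card ≤ N →
    (∀ I ∈ F, ∀ J ⊆ I, J ∈ F) →
    M d F.card ≤ (F.filter (fun I => I.card ≤ d)).card := by
  intro N
  induction N with
  | zero =>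
      intro d F hF _
      have : F = ∅ := Finset.card_eq_zero.mp (by omega)
      simp [this, M_zero_right]
  | succ N ih =>
      intro d F hFN hdc
      rcases F.eq_empty_or_nonempty with rfl | hne
      · simp [M_zero_right]
      have hempty : ∅ ∈ F := by
        obtain ⟨I, hI⟩ := hne
        exact hdc I hI ∅ (Finset.empty_subset I)
      rcases Nat.eq_zero_or_pos d with rfl | hd
      · calc M 0 F.card ≤ 1 := M_zero_le_one _
          _ ≤ _ := by
            rw [Nat.one_le_iff_ne_zero, ← Nat.pos_iff_ne_zero, Finset.card_pos]
            exact ⟨∅, Finset.mem_filter.mpr ⟨hempty, by simp⟩⟩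
      by_cases hall : ∀ I ∈ F, I = ∅
      · have : F = {∅} := by
          apply Finset.eq_singleton_iff_unique_mem.mpr
          exact ⟨hempty, hall⟩
        rw [this]
        rw [Finset.filter_singleton]
        simp [M_one]
      push_neg at hall
      obtain ⟨I₀, hI₀F, hI₀ne⟩ := hall
      obtain ⟨a, ha⟩ := hI₀ne
      set F₀ := F.filter (fun I => a ∉ I) with hF₀
      set G := F.filter (fun I => a ∈ I) with hG
      set F₁ := G.image (fun I => I.erase a) with hF₁
      have hsplit : F₀.card + G.card = F.card := by
        rw [hF₀, hG]
        have h := Finset.card_filter_add_card_filter_not (s := F) (p := fun I => a ∈ I)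
        omega
      have hinjG : Set.InjOn (fun I : Finset α => I.erase a) ↑G := by
        intro I hI J hJ h
        have hIa : a ∈ I := (Finset.mem_filter.mp hI).2
        have hJa : a ∈ J := (Finset.mem_filter.mp hJ).2
        rw [← Finset.insert_erase hIa, ← Finset.insert_erase hJa]
        simp only at h
        rw [h]
      have hF₁card : F₁.card = G.card := Finset.card_image_of_injOn hinjG
      have hF₁F₀ : F₁ ⊆ F₀ := by
        intro J hJ
        obtain ⟨I, hI, rfl⟩ := Finset.mem_image.mp hJ
        have hIF : I ∈ F := (Finset.mem_filter.mp hI).1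
        refine Finset.mem_filter.mpr ⟨hdc I hIF _ (Finset.erase_subset a I), ?_⟩
        exact Finset.notMem_erase a I
      have hF₀pos : 0 < F₀.card := Finset.card_pos.mpr
        ⟨∅, Finset.mem_filter.mpr ⟨hempty, Finset.notMem_empty a⟩⟩
      have hG_ne : G.Nonempty := ⟨I₀, Finset.mem_filter.mpr ⟨hI₀F, ha⟩⟩
      have hF₀lt : F₀.card < F.card := by
        have := Finset.card_pos.mpr hG_ne
        omega
      have hF₀dc : ∀ I ∈ F₀, ∀ J ⊆ I, J ∈ F₀ := by
        intro I hI J hJ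
        obtain ⟨hIF, hIa⟩ := Finset.mem_filter.mp hI
        exact Finset.mem_filter.mpr ⟨hdc I hIF J hJ, fun h => hIa (hJ h)⟩
      have hF₁dc : ∀ I ∈ F₁, ∀ J ⊆ I, J ∈ F₁ := by
        intro I hI J hJ
        obtain ⟨I', hI', rfl⟩ := Finset.mem_image.mp hI
        obtain ⟨hI'F, hI'a⟩ := Finset.mem_filter.mp hI'
        have haJ : a ∉ J := fun h => Finset.notMem_erase a I' (hJ h)
        have hins : insert a J ∈ G := by
          refine Finset.mem_filter.mpr ⟨hdc I' hI'F _ ?_, Finset.mem_insert_self a J⟩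
          rw [Finset.insert_subset_iff]
          exact ⟨hI'a, hJ.trans (Finset.erase_subset a I')⟩
        refine Finset.mem_image.mpr ⟨insert a J, hins, ?_⟩
        rw [Finset.erase_insert haJ]
      -- count split
      have hcount : (F.filter (fun I => I.card ≤ d)).card
          = (F₀.filter (fun I => I.card ≤ d)).card + (F₁.filter (fun I => I.card ≤ d - 1)).card := by
        have h1 : (F.filter (fun I => I.card ≤ d)).card
            = (F₀.filter (fun I => I.card ≤ d)).card + (G.filter (fun I => I.card ≤ d)).card := by
          rw [hF₀, hG, Finset.filter_comm, Finset.filter_comm (fun I => a ∈ I)]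
          have h := Finset.card_filter_add_card_filter_not
            (s := F.filter (fun I => I.card ≤ d)) (p := fun I => a ∈ I)
          omega
        have h2 : (F₁.filter (fun I => I.card ≤ d - 1)) = (G.filter (fun I => I.card ≤ d)).image (fun I => I.erase a) := by
          rw [hF₁, Finset.filter_image]
          apply congrArg
          apply Finset.filter_congr
          intro I hI
          have hIa : a ∈ I := (Finset.mem_filter.mp hI).2
          have : (I.erase a).card = I.card - 1 := Finset.card_erase_of_mem hIa
          have hIpos : 1 ≤ I.card := Finset.card_pos.mpr ⟨a, hIa⟩
          simp only [Function.comp, this]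
          constructor
          · intro h; omega
          · intro h; omega
        have h3 : ((G.filter (fun I => I.card ≤ d)).image (fun I => I.erase a)).card
            = (G.filter (fun I => I.card ≤ d)).card :=
          Finset.card_image_of_injOn (hinjG.mono (by intro x hx; exact (Finset.mem_filter.mp hx).1))
        rw [h1, h2, h3]
      have hFcard : F.card = F₀.card + F₁.card := by omega
      calc M d F.card = M d (F₀.card + F₁.card) := by rw [hFcard]
        _ ≤ M d F₀.card + M (d-1) F₁.card :=
            M_subadd' (le_trans (Finset.card_le_card hF₁F₀) le_rfl)
        _ ≤ _ := by
          rw [hcount]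
          gcongr
          · exact ih d F₀ (by omega) hF₀dc
          · exact ih (d-1) F₁ (by omega) hF₁dc


/-- downward closed family counting lemma, convenient form -/
lemma fam_count' {α : Type*} [DecidableEq α] (d : ℕ) (F : Finset (Finset α))
    (hdc : ∀ I ∈ F, ∀ J ⊆ I, J ∈ F) :
    M d F.card ≤ (F.filter (fun I => I.card ≤ d)).card :=
  fam_count F.card d F le_rfl hdc

attribute [local instance] Classical.propDecidable

variable {n : ℕ}

lemma signVec_sq (σ : Fin n → Bool) (i : Fin n) : signVec σ i * signVec σ i = 1 := by
  cases h : σ i <;> simp [signVec, h]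

lemma signVec_mul_ne {σ τ : Fin n → Bool} {i : Fin n} (h : σ i ≠ τ i) :
    signVec σ i * signVec τ i = -1 := by
  cases h1 : σ i <;> cases h2 : τ i <;> simp_all [signVec]

/-- evaluation of the monomial `x^I` on the points of `S` -/
def ev (S : Finset (Fin n → Bool)) (I : Finset (Fin n)) : ↥S → ℝ :=
  fun σ => ∏ i ∈ I, signVec σ.1 i

/-- binary encoding of a monomial -/
def ord (I : Finset (Fin n)) : ℕ := ∑ i ∈ I, 2 ^ (i : ℕ)

lemma ord_inj : Function.Injective (ord (n := n)) := by
  intro I J h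
  have h2 : ∑ i ∈ I.map Fin.valEmbedding, 2 ^ i = ∑ i ∈ J.map Fin.valEmbedding, 2 ^ i := by
    rw [Finset.sum_map, Finset.sum_map]
    exact h
  have := Finset.geomSum_injective (le_refl 2) h2
  exact Finset.map_injective _ this

lemma ord_erase_add {I : Finset (Fin n)} {i : Fin n} (h : i ∈ I) :
    ord (I.erase i) + 2 ^ (i : ℕ) = ord I := by
  rw [ord, ord, Finset.sum_erase_add _ _ h]

lemma ord_insert {J : Finset (Fin n)} {i : Fin n} (h : i ∉ J) :
    ord (insert i J) = 2 ^ (i : ℕ) + ord J := by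
  rw [ord, ord, Finset.sum_insert h]

/-- the monomial evaluations span all functions on `S` -/
lemma span_ev_top (S : Finset (Fin n → Bool)) :
    Submodule.span ℝ (Set.range (ev S)) = ⊤ := by
  rw [eq_top_iff]
  intro f _
  have hf : f = ∑ σ₀ : ↥S, f σ₀ • fun σ => if σ₀ = σ then (1:ℝ) else 0 := pi_eq_sum_univ f
  rw [hf]
  apply Submodule.sum_mem
  intro σ₀ _
  apply Submodule.smul_mem
  have hδ : (fun σ => if σ₀ = σ then (1:ℝ) else 0)
      = ((2:ℝ) ^ n)⁻¹ • ∑ I : Finset (Fin n), (∏ i ∈ I, signVec σ₀.1 i) • ev S I := by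
    funext σ
    have happ : (((2:ℝ) ^ n)⁻¹ • ∑ I : Finset (Fin n), (∏ i ∈ I, signVec σ₀.1 i) • ev S I) σ
        = ((2:ℝ) ^ n)⁻¹ * ∑ I : Finset (Fin n), (∏ i ∈ I, signVec σ₀.1 i) * (ev S I σ) := by
      rw [Pi.smul_apply, Finset.sum_apply, smul_eq_mul]
      congr 1
    have hps : ∑ I : Finset (Fin n), (∏ i ∈ I, signVec σ₀.1 i) * (ev S I σ)
        = ∑ I ∈ Finset.univ.powerset,
            (∏ i ∈ I, signVec σ₀.1 i * signVec σ.1 i) * ∏ i ∈ Finset.univ \ I, (1:ℝ) := by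
      rw [Finset.powerset_univ]
      exact Finset.sum_congr rfl fun I _ => by
        rw [Finset.prod_const_one, mul_one, Finset.prod_mul_distrib]
        rfl
    rw [happ, hps, ← Finset.prod_add]
    by_cases h : σ₀ = σ
    · subst h
      rw [if_pos rfl]
      have hprod : ∏ i : Fin n, (signVec σ₀.1 i * signVec σ₀.1 i + 1) = 2 ^ n := by
        have h2 : ∀ i ∈ Finset.univ, signVec σ₀.1 i * signVec σ₀.1 i + 1 = 2 :=
          fun i _ => by rw [signVec_sq]; norm_num
        rw [Finset.prod_congr rfl h2, Finset.prod_const, Finset.card_univ, Fintype.card_fin]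
      rw [hprod, inv_mul_cancel₀ (by positivity)]
    · have hne : ∃ i, σ₀.1 i ≠ σ.1 i := by
        by_contra hc
        push_neg at hc
        exact h (Subtype.ext (funext hc))
      obtain ⟨i, hi⟩ := hne
      have hzero : ∏ j : Fin n, (signVec σ₀.1 j * signVec σ.1 j + 1) = 0 :=
        Finset.prod_eq_zero (Finset.mem_univ i) (by rw [signVec_mul_ne hi]; ring)
      rw [if_neg h, hzero, mul_zero]
  rw [hδ]
  apply Submodule.smul_mem
  apply Submodule.sum_mem
  intro I _
  exact Submodule.smul_mem _ _ (Submodule.subset_span ⟨I, rfl⟩)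

/-- the greedy (footprint) set of standard monomials -/
noncomputable def Δ (S : Finset (Fin n → Bool)) : Finset (Finset (Fin n)) :=
  Finset.univ.filter
    (fun I => ev S I ∉ Submodule.span ℝ (ev S '' {J | ord J < ord I}))

lemma mem_delta_iff {S : Finset (Fin n → Bool)} {I : Finset (Fin n)} :
    I ∈ Δ S ↔ ev S I ∉ Submodule.span ℝ (ev S '' {J | ord J < ord I}) := by
  simp [Δ]

/-- multiplication by the `i`-th coordinate, as a linear map on functions on `S` -/
noncomputable def mulX (S : Finset (Fin n → Bool)) (i : Fin n) : (↥S → ℝ) →ₗ[ℝ] (↥S → ℝ) where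
  toFun f := fun σ => signVec σ.1 i * f σ
  map_add' f g := by funext σ; simp [mul_add]
  map_smul' c f := by funext σ; simp only [Pi.smul_apply, smul_eq_mul, RingHom.id_apply]; ring

lemma mulX_ev_mem {S : Finset (Fin n → Bool)} {i : Fin n} {J : Finset (Fin n)} (h : i ∈ J) :
    mulX S i (ev S J) = ev S (J.erase i) := by
  funext σ
  show signVec σ.1 i * ∏ j ∈ J, signVec σ.1 j = ∏ j ∈ J.erase i, signVec σ.1 j
  rw [← Finset.prod_erase_mul J _ h, ← mul_assoc, mul_comm (signVec σ.1 i), mul_assoc,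
    signVec_sq, mul_one]

lemma mulX_ev_not_mem {S : Finset (Fin n → Bool)} {i : Fin n} {J : Finset (Fin n)} (h : i ∉ J) :
    mulX S i (ev S J) = ev S (insert i J) := by
  funext σ
  show signVec σ.1 i * ∏ j ∈ J, signVec σ.1 j = ∏ j ∈ insert i J, signVec σ.1 j
  rw [Finset.prod_insert h]

lemma delta_erase {S : Finset (Fin n → Bool)} {I : Finset (Fin n)} {i : Fin n}
    (hI : I ∈ Δ S) (hi : i ∈ I) : I.erase i ∈ Δ S := by
  by_contra hc
  rw [mem_delta_iff, not_not] at hc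
  have key : ev S I = mulX S i (ev S (I.erase i)) := by
    rw [mulX_ev_not_mem (Finset.notMem_erase i I), Finset.insert_erase hi]
  have h1 : ev S I ∈ Submodule.map (mulX S i)
      (Submodule.span ℝ (ev S '' {J | ord J < ord (I.erase i)})) := by
    rw [key]
    exact Submodule.mem_map_of_mem hc
  rw [Submodule.map_span] at h1
  have h2 : (mulX S i) '' (ev S '' {J | ord J < ord (I.erase i)})
      ⊆ ev S '' {J | ord J < ord I} := by
    rintro _ ⟨_, ⟨J, hJ, rfl⟩, rfl⟩
    simp only [Set.mem_setOf_eq] at hJ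
    have hII := ord_erase_add hi
    by_cases hiJ : i ∈ J
    · refine ⟨J.erase i, ?_, (mulX_ev_mem hiJ).symm⟩
      have hJJ := ord_erase_add hiJ
      have hp : 1 ≤ 2 ^ (i : ℕ) := Nat.one_le_two_pow
      simp only [Set.mem_setOf_eq]
      omega
    · refine ⟨insert i J, ?_, (mulX_ev_not_mem hiJ).symm⟩
      have hJJ := ord_insert hiJ
      have hp : 1 ≤ 2 ^ (i : ℕ) := Nat.one_le_two_pow
      simp only [Set.mem_setOf_eq]
      omega
  have h3 : ev S I ∈ Submodule.span ℝ (ev S '' {J | ord J < ord I}) :=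
    Submodule.span_mono h2 h1
  exact (mem_delta_iff.mp hI) h3

lemma delta_dc {S : Finset (Fin n → Bool)} :
    ∀ I ∈ Δ S, ∀ J ⊆ I, J ∈ Δ S := by
  suffices H : ∀ (N : ℕ) (I : Finset (Fin n)), I.card ≤ N → I ∈ Δ S → ∀ J ⊆ I, J ∈ Δ S by
    intro I hI J hJ
    exact H I.card I le_rfl hI J hJ
  intro N
  induction N with
  | zero =>
      intro I hcard hI J hJ
      have : I = ∅ := Finset.card_eq_zero.mp (by omega)
      subst this
      rwa [Finset.subset_empty.mp hJ]
  | succ N ih =>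
      intro I hcard hI J hJ
      by_cases h : J = I
      · rwa [h]
      obtain ⟨i, hiI, hiJ⟩ : ∃ i ∈ I, i ∉ J := by
        by_contra hc
        push_neg at hc
        exact h (Finset.Subset.antisymm hJ hc)
      have hJe : J ⊆ I.erase i := Finset.subset_erase.mpr ⟨hJ, hiJ⟩
      have hcard' : (I.erase i).card ≤ N := by
        have := Finset.card_erase_of_mem hiI
        omega
      exact ih (I.erase i) hcard' (delta_erase hI hiI) J hJe

lemma ev_mem_span_delta (S : Finset (Fin n → Bool)) (I : Finset (Fin n)) :
    ev S I ∈ Submodule.span ℝ (ev S '' ↑(Δ S)) := by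
  suffices H : ∀ (N : ℕ) (I : Finset (Fin n)), ord I < N →
      ev S I ∈ Submodule.span ℝ (ev S '' ↑(Δ S)) from H (ord I + 1) I (by omega)
  intro N
  induction N with
  | zero => intro I h; omega
  | succ N ih =>
      intro I hord
      by_cases hI : I ∈ Δ S
      · exact Submodule.subset_span ⟨I, hI, rfl⟩
      · rw [mem_delta_iff, not_not] at hI
        have hle : Submodule.span ℝ (ev S '' {J | ord J < ord I})
            ≤ Submodule.span ℝ (ev S '' ↑(Δ S)) := by
          rw [Submodule.span_le]
          rintro _ ⟨J, hJ, rfl⟩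
          simp only [Set.mem_setOf_eq] at hJ
          exact ih J (by omega)
        exact hle hI

lemma card_le_delta (S : Finset (Fin n → Bool)) : S.card ≤ (Δ S).card := by
  have htop : Submodule.span ℝ (ev S '' ↑(Δ S)) = ⊤ := by
    rw [eq_top_iff, ← span_ev_top S, Submodule.span_le]
    rintro _ ⟨I, rfl⟩
    exact ev_mem_span_delta S I
  have h1 : S.card = finrank ℝ (↥S → ℝ) := by
    rw [Module.finrank_fintype_fun_eq_card, Fintype.card_coe]
  have h2 : finrank ℝ (↥S → ℝ) = finrank ℝ (Submodule.span ℝ (ev S '' ↑(Δ S))) := by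
    rw [htop, finrank_top]
  have h3 : ev S '' ↑(Δ S) = ↑((Δ S).image (ev S)) := by
    rw [Finset.coe_image]
  have h4 : finrank ℝ (Submodule.span ℝ (↑((Δ S).image (ev S)) : Set (↥S → ℝ)))
      ≤ ((Δ S).image (ev S)).card := finrank_span_finset_le_card _
  have h5 : ((Δ S).image (ev S)).card ≤ (Δ S).card := Finset.card_image_le
  rw [h1, h2, h3]
  omega

/-- greedy linear independence: auxiliary zero-coefficients lemma -/
lemma greedy_aux {ι V : Type*} [AddCommGroup V] [Module ℝ V] (v : ι → V) (r : ι → ℕ)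
    (hr : Function.Injective r) :
    ∀ (N : ℕ) (T : Finset ι), T.card ≤ N →
    (∀ i ∈ T, v i ∉ Submodule.span ℝ (v '' {j | r j < r i})) →
    ∀ g : ι → ℝ, ∑ x ∈ T, g x • v x = 0 → ∀ x ∈ T, g x = 0 := by
  intro N
  induction N with
  | zero =>
      intro T hT _ g _ x hx
      have : T = ∅ := Finset.card_eq_zero.mp (by omega)
      subst this
      exact absurd hx (Finset.notMem_empty x)
  | succ N ih =>
      intro T hT hspan g hsum x hx
      rcases T.eq_empty_or_nonempty with rfl | hne
      · exact absurd hx (Finset.notMem_empty x)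
      obtain ⟨i, hi, hmax⟩ := T.exists_max_image r hne
      have hgi : g i = 0 := by
        by_contra hgi
        have hsum' : g i • v i + ∑ x ∈ T.erase i, g x • v x = 0 :=
          (Finset.add_sum_erase T (fun x => g x • v x) hi).symm ▸ hsum
        have hvi : v i = ∑ x ∈ T.erase i, (-(g x) * (g i)⁻¹) • v x := by
          have h1 : g i • v i = -∑ x ∈ T.erase i, g x • v x :=
            eq_neg_of_add_eq_zero_left hsum'
          have h2 : v i = (g i)⁻¹ • (g i • v i) := by
            rw [smul_smul, inv_mul_cancel₀ hgi, one_smul]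
          rw [h2, h1, ← Finset.sum_neg_distrib, Finset.smul_sum]
          apply Finset.sum_congr rfl
          intro x _
          rw [← neg_smul, smul_smul]
          ring_nf
        have hmem : v i ∈ Submodule.span ℝ (v '' {j | r j < r i}) := by
          rw [hvi]
          apply Submodule.sum_mem
          intro x hxe
          apply Submodule.smul_mem
          apply Submodule.subset_span
          refine ⟨x, ?_, rfl⟩
          have hxT : x ∈ T := Finset.mem_of_mem_erase hxe
          have hxi : x ≠ i := Finset.ne_of_mem_erase hxe
          have := hmax x hxT
          exact lt_of_le_of_ne this (fun hc => hxi (hr hc))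
        exact hspan i hi hmem
      have hsum2 : ∑ x ∈ T.erase i, g x • v x = 0 := by
        have hsum' : g i • v i + ∑ x ∈ T.erase i, g x • v x = 0 :=
          (Finset.add_sum_erase T (fun x => g x • v x) hi).symm ▸ hsum
        rw [hgi, zero_smul, zero_add] at hsum'
        exact hsum'
      have hcard : (T.erase i).card ≤ N := by
        have := Finset.card_erase_of_mem hi
        have := Finset.card_pos.mpr hne
        omega
      rcases eq_or_ne x i with rfl | hxi
      · exact hgi
      · exact ih (T.erase i) hcard
          (fun j hj => hspan j (Finset.mem_of_mem_erase hj)) g hsum2 x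
          (Finset.mem_erase.mpr ⟨hxi, hx⟩)

lemma greedy_li {ι V : Type*} [AddCommGroup V] [Module ℝ V] (T : Finset ι) (v : ι → V)
    (r : ι → ℕ) (hr : Function.Injective r)
    (h : ∀ i ∈ T, v i ∉ Submodule.span ℝ (v '' {j | r j < r i})) :
    LinearIndependent ℝ (fun x : ↥T => v ↑x) := by
  rw [Fintype.linearIndependent_iff]
  intro g hg i
  classical
  set g' : ι → ℝ := fun j => if hj : j ∈ T then g ⟨j, hj⟩ else 0 with hg'
  have hsum : ∑ x ∈ T, g' x • v x = 0 := by
    rw [← Finset.sum_attach T (fun x => g' x • v x)]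
    rw [← hg]
    rw [Finset.univ_eq_attach]
    apply Finset.sum_congr rfl
    intro x _
    congr 1
    simp [hg', x.2]
  have := greedy_aux v r hr T.card T le_rfl h g' hsum i.1 i.2
  simpa [hg', i.2] using this

/-- THE CORE LEMMA -/
theorem core (n d : ℕ) (S : Finset (Fin n → Bool))
    (V : Submodule ℝ ({I : Finset (Fin n) // I.card ≤ d} → ℝ))
    (hV : ∀ σ ∈ S, tensorLift n d (signVec σ) ∈ V) :
    M d S.card ≤ finrank ℝ V := by
  classical
  set Δd : Finset (Finset (Fin n)) := (Δ S).filter (fun I => I.card ≤ d) with hΔd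
  -- linear independence of small-degree standard monomials
  have hli : LinearIndependent ℝ (fun I : ↥Δd => ev S I.1) :=
    greedy_li Δd (ev S) ord ord_inj
      (fun I hI => mem_delta_iff.mp (Finset.mem_filter.mp hI).1)
  -- the matrix
  set A : Matrix {I : Finset (Fin n) // I.card ≤ d} ↥S ℝ :=
    Matrix.of (fun I σ => ev S I.1 σ) with hA
  have hcolle : Submodule.span ℝ (Set.range Aᵀ) ≤ V := by
    rw [Submodule.span_le]
    rintro _ ⟨σ, rfl⟩
    have : Aᵀ σ = tensorLift n d (signVec σ.1) := rfl
    rw [this]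
    exact hV σ.1 σ.2
  have hrange : Set.range (fun I : ↥Δd => ev S I.1) ⊆ Set.range A := by
    rintro _ ⟨I, rfl⟩
    exact ⟨⟨I.1, (Finset.mem_filter.mp I.2).2⟩, rfl⟩
  have h1 : Δd.card ≤ finrank ℝ (Submodule.span ℝ (Set.range A)) := by
    have heq : finrank ℝ (Submodule.span ℝ (Set.range (fun I : ↥Δd => ev S I.1)))
        = Fintype.card ↥Δd := finrank_span_eq_card hli
    rw [← Fintype.card_coe Δd, ← heq]
    exact Submodule.finrank_mono (Submodule.span_mono hrange)
  have h2 : finrank ℝ (Submodule.span ℝ (Set.range A)) = A.rank :=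
    (Matrix.rank_eq_finrank_span_row A).symm
  have h3 : A.rank = finrank ℝ (Submodule.span ℝ (Set.range Aᵀ)) :=
    Matrix.rank_eq_finrank_span_cols A
  have h4 : finrank ℝ (Submodule.span ℝ (Set.range Aᵀ)) ≤ finrank ℝ V :=
    Submodule.finrank_mono hcolle
  have h5 : M d S.card ≤ Δd.card := by
    calc M d S.card ≤ M d (Δ S).card := M_mono (card_le_delta S)
      _ ≤ Δd.card := fam_count' d (Δ S) delta_dc
  omega


/-- key counting bound: few cube points have their lift in a low-dimensional subspace -/
lemma span_filter_card_lt (n d k : ℕ)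
    (V : Submodule ℝ ({I : Finset (Fin n) // I.card ≤ d} → ℝ))
    (hfr : finrank ℝ V < ∑ i ∈ Finset.range (d + 1), k.choose i) :
    ((Finset.univ : Finset (Fin n → Bool)).filter
        (fun σ => tensorLift n d (signVec σ) ∈ V)).card < 2 ^ k := by
  by_contra hcon
  push_neg at hcon
  set S := (Finset.univ : Finset (Fin n → Bool)).filter
      (fun σ => tensorLift n d (signVec σ) ∈ V) with hS
  have h1 : M d (2 ^ k) ≤ M d S.card := M_mono hcon
  rw [M_two_pow] at h1
  have h2 : M d S.card ≤ finrank ℝ V :=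
    core n d S V (fun σ hσ => (Finset.mem_filter.mp hσ).2)
  omega

lemma finrank_span_range_le {W : Type*} [AddCommGroup W] [Module ℝ W]
    {ι : Type*} [Fintype ι] (w : ι → W) :
    finrank ℝ (Submodule.span ℝ (Set.range w)) ≤ Fintype.card ι := by
  classical
  have h1 : Set.range w = ↑(Finset.univ.image w) := by
    rw [Finset.coe_image, Finset.coe_univ, Set.image_univ]
  rw [h1]
  exact le_trans (finrank_span_finset_le_card _)
    (le_trans Finset.card_image_le (by simp))

lemma not_li_exists_mem_span {ι W : Type*} [AddCommGroup W] [Module ℝ W] [Fintype ι]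
    {v : ι → W} (h : ¬ LinearIndependent ℝ v) :
    ∃ j, v j ∈ Submodule.span ℝ (Set.range (fun i : {i : ι // i ≠ j} => v i.1)) := by
  classical
  rw [Fintype.not_linearIndependent_iff] at h
  obtain ⟨g, hsum, j, hgj⟩ := h
  refine ⟨j, ?_⟩
  have hsum' : g j • v j + ∑ x ∈ Finset.univ.erase j, g x • v x = 0 :=
    (Finset.add_sum_erase Finset.univ (fun x => g x • v x) (Finset.mem_univ j)).symm ▸ hsum
  have hvj : v j = ∑ x ∈ Finset.univ.erase j, (-(g x) * (g j)⁻¹) • v x := by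
    have h1 : g j • v j = -∑ x ∈ Finset.univ.erase j, g x • v x :=
      eq_neg_of_add_eq_zero_left hsum'
    have h2 : v j = (g j)⁻¹ • (g j • v j) := by
      rw [smul_smul, inv_mul_cancel₀ hgj, one_smul]
    rw [h2, h1, ← Finset.sum_neg_distrib, Finset.smul_sum]
    apply Finset.sum_congr rfl
    intro x _
    rw [← neg_smul, smul_smul]
    ring_nf
  rw [hvj]
  apply Submodule.sum_mem
  intro x hx
  apply Submodule.smul_mem
  exact Submodule.subset_span ⟨⟨x, Finset.ne_of_mem_erase hx⟩, rfl⟩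

lemma filter_prod_card {γ δ : Type*} [Fintype γ] [Fintype δ]
    (P : γ × δ → Prop) (c : ℕ)
    (hc : ∀ y : δ, ((Finset.univ : Finset γ).filter (fun x => P (x, y))).card ≤ c) :
    ((Finset.univ : Finset (γ × δ)).filter P).card ≤ c * Fintype.card δ := by
  classical
  rw [Finset.card_eq_sum_card_fiberwise
    (f := Prod.snd) (t := Finset.univ) (fun x _ => Finset.mem_univ _)]
  have hfib : ∀ y : δ,
      (((Finset.univ : Finset (γ × δ)).filter P).filter (fun p => p.2 = y)).card ≤ c := by
    intro y
    refine le_trans (Finset.card_le_card_of_injOn Prod.fst ?_ ?_) (hc y)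
    · intro p hp
      simp only [Finset.coe_filter, Set.mem_setOf_eq, Finset.mem_coe, Finset.mem_filter, Finset.mem_univ, true_and] at hp ⊢
      obtain ⟨hP, h2⟩ := hp
      have : p = (p.1, y) := by rw [← h2]
      rwa [← this]
    · intro p hp q hq h
      simp only [Finset.coe_filter, Set.mem_setOf_eq] at hp hq
      exact Prod.ext h (hp.2.trans hq.2.symm)
  calc ∑ y : δ, (((Finset.univ : Finset (γ × δ)).filter P).filter (fun p => p.2 = y)).card
      ≤ ∑ _y : δ, c := Finset.sum_le_sum (fun y _ => hfib y)
    _ = c * Fintype.card δ := by rw [Finset.sum_const, Finset.card_univ, smul_eq_mul, mul_comm]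


end ASW

open ASW Module in
theorem random_tensors_linear_independence (n d m t : ℕ)
    (hn : 1 ≤ n) (hd : 1 ≤ d) (hm : 1 ≤ m) (ht : 1 ≤ t) (k : ℕ)
    (hk : (k : ℤ) = ⌊(n : ℝ) -
      Real.logb 2 (∑ i ∈ Finset.range (d + 1), (n.choose i : ℝ)) - t⌋)
    (hmk : m < ∑ i ∈ Finset.range (d + 1), k.choose i) :
    1 - (2 : ℝ) ^ (-(t : ℤ)) <
      (Nat.card {ω : Fin m → Fin n → Bool //
          LinearIndependent ℝ (fun j : Fin m => tensorLift n d (signVec (ω j)))} : ℝ) /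
        2 ^ (n * m) := by
  classical
  set Bn := ∑ i ∈ Finset.range (d + 1), n.choose i with hBn
  set Bk := ∑ i ∈ Finset.range (d + 1), k.choose i with hBk
  have hBn1 : 1 ≤ Bn := by
    calc 1 = n.choose 0 := (Nat.choose_zero_right n).symm
      _ ≤ Bn := Finset.single_le_sum (f := fun i => n.choose i)
          (fun i _ => Nat.zero_le _) (Finset.mem_range.mpr (by omega))
  have hcast : ((Bn : ℝ)) = ∑ i ∈ Finset.range (d + 1), (n.choose i : ℝ) := by
    rw [hBn]; push_cast; ring
  have hBnR : (1:ℝ) ≤ (Bn:ℝ) := by exact_mod_cast hBn1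
  have hfloor : (k : ℝ) ≤ (n : ℝ) - Real.logb 2 (Bn:ℝ) - t := by
    rw [hcast]
    have h1 := Int.floor_le ((n : ℝ) -
      Real.logb 2 (∑ i ∈ Finset.range (d + 1), (n.choose i : ℝ)) - t)
    rw [← hk] at h1
    exact_mod_cast h1
  have hlogb0 : 0 ≤ Real.logb 2 (Bn:ℝ) := Real.logb_nonneg (by norm_num) hBnR
  have htR : (0:ℝ) ≤ (t:ℝ) := by positivity
  have hkn : k ≤ n := by
    have : (k:ℝ) ≤ (n:ℝ) := by linarith
    exact_mod_cast this
  have hBkBn : Bk ≤ Bn := Finset.sum_le_sum (fun i _ => Nat.choose_le_choose i hkn)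
  -- key real inequality
  have hkey : (Bn:ℝ) * 2 ^ k * 2 ^ t ≤ 2 ^ n := by
    have h1 : (k:ℝ) + Real.logb 2 (Bn:ℝ) + (t:ℝ) ≤ (n:ℝ) := by linarith
    have h2 : (2:ℝ) ^ ((k:ℝ) + Real.logb 2 (Bn:ℝ) + (t:ℝ)) ≤ (2:ℝ) ^ ((n:ℝ)) :=
      Real.rpow_le_rpow_of_exponent_le (by norm_num) h1
    rw [Real.rpow_add (by norm_num), Real.rpow_add (by norm_num),
      Real.rpow_logb (by norm_num) (by norm_num) (by linarith),
      Real.rpow_natCast, Real.rpow_natCast, Real.rpow_natCast] at h2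
    calc (Bn:ℝ) * 2 ^ k * 2 ^ t = 2 ^ k * (Bn:ℝ) * 2 ^ t := by ring
      _ ≤ 2 ^ n := h2
  -- counting
  set Good := (Finset.univ : Finset (Fin m → Fin n → Bool)).filter
    (fun ω => LinearIndependent ℝ (fun j : Fin m => tensorLift n d (signVec (ω j)))) with hGood
  set Bad := (Finset.univ : Finset (Fin m → Fin n → Bool)).filter
    (fun ω => ¬ LinearIndependent ℝ (fun j : Fin m => tensorLift n d (signVec (ω j)))) with hBad
  have hNat : (Nat.card {ω : Fin m → Fin n → Bool //
      LinearIndependent ℝ (fun j : Fin m => tensorLift n d (signVec (ω j)))}) = Good.card := by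
    rw [Nat.card_eq_fintype_card, Fintype.card_subtype]
  have hTot : Fintype.card (Fin m → Fin n → Bool) = 2 ^ (n * m) := by
    rw [Fintype.card_fun]
    simp [pow_mul]
  have hGB : Good.card + Bad.card = 2 ^ (n * m) := by
    rw [← hTot, ← Finset.card_univ]
    exact Finset.card_filter_add_card_filter_not _
  -- union bound
  set A : Fin m → Finset (Fin m → Fin n → Bool) := fun j =>
    Finset.univ.filter (fun ω => tensorLift n d (signVec (ω j)) ∈
      Submodule.span ℝ (Set.range
        (fun i : {i : Fin m // i ≠ j} => tensorLift n d (signVec (ω i.1))))) with hA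
  have hBadA : Bad ⊆ Finset.univ.biUnion A := by
    intro ω hω
    rw [Finset.mem_biUnion]
    have h := (Finset.mem_filter.mp hω).2
    obtain ⟨j, hj⟩ := not_li_exists_mem_span h
    exact ⟨j, Finset.mem_univ j, Finset.mem_filter.mpr ⟨Finset.mem_univ ω, hj⟩⟩
  have hAj : ∀ j, (A j).card ≤ (2 ^ k - 1) * (2 ^ n) ^ (m - 1) := by
    intro j
    have hsub : Fintype.card {i : Fin m // i ≠ j} = m - 1 := by
      have h1 := Fintype.card_subtype_compl (fun i : Fin m => i = j)
      simp only [Fintype.card_subtype_eq, Fintype.card_fin] at h1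
      exact h1
    have hcard : (A j).card =
        ((Finset.univ : Finset ((Fin n → Bool) × ({i : Fin m // i ≠ j} → Fin n → Bool))).filter
          (fun p =>
            tensorLift n d (signVec p.1) ∈ Submodule.span ℝ (Set.range
              (fun i : {i : Fin m // i ≠ j} => tensorLift n d (signVec (p.2 i)))))).card := by
      apply Finset.card_equiv (Equiv.funSplitAt j (Fin n → Bool))
      intro ω
      simp only [hA, Finset.mem_filter, Finset.mem_univ, true_and]
      exact Iff.rfl
    have hfiber : ∀ y : ({i : Fin m // i ≠ j} → Fin n → Bool),
        ((Finset.univ : Finset (Fin n → Bool)).filter (fun σ =>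
          tensorLift n d (signVec σ) ∈ Submodule.span ℝ (Set.range
            (fun i : {i : Fin m // i ≠ j} => tensorLift n d (signVec (y i)))))).card
          ≤ 2 ^ k - 1 := by
      intro y
      have hV : finrank ℝ (Submodule.span ℝ (Set.range
          (fun i : {i : Fin m // i ≠ j} => tensorLift n d (signVec (y i))))) < Bk := by
        have h1 := finrank_span_range_le
          (fun i : {i : Fin m // i ≠ j} => tensorLift n d (signVec (y i)))
        exact lt_of_le_of_lt (le_trans h1 (le_of_eq hsub))
          (lt_of_le_of_lt (Nat.sub_le m 1) hmk)
      have h2 := span_filter_card_lt n d k _ hV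
      exact Nat.le_pred_of_lt h2
    calc (A j).card = _ := hcard
      _ ≤ (2 ^ k - 1) * Fintype.card ({i : Fin m // i ≠ j} → Fin n → Bool) :=
          filter_prod_card (fun p : (Fin n → Bool) × ({i : Fin m // i ≠ j} → Fin n → Bool) =>
            tensorLift n d (signVec p.1) ∈ Submodule.span ℝ (Set.range
              (fun i : {i : Fin m // i ≠ j} => tensorLift n d (signVec (p.2 i)))))
            (2 ^ k - 1) hfiber
      _ = (2 ^ k - 1) * (2 ^ n) ^ (m - 1) := by
          rw [Fintype.card_fun, hsub]
          congr 1
          simp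
  have hBadCard : Bad.card ≤ m * ((2 ^ k - 1) * (2 ^ n) ^ (m - 1)) := by
    calc Bad.card ≤ (Finset.univ.biUnion A).card := Finset.card_le_card hBadA
      _ ≤ ∑ j : Fin m, (A j).card := Finset.card_biUnion_le
      _ ≤ ∑ _j : Fin m, (2 ^ k - 1) * (2 ^ n) ^ (m - 1) :=
          Finset.sum_le_sum (fun j _ => hAj j)
      _ = m * ((2 ^ k - 1) * (2 ^ n) ^ (m - 1)) := by
          rw [Finset.sum_const, Finset.card_univ, Fintype.card_fin, smul_eq_mul]
  -- real endgame
  have h2k1 : (1:ℕ) ≤ 2 ^ k := Nat.one_le_two_pow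
  have hmBn : m < Bn := lt_of_lt_of_le hmk hBkBn
  have hBadR : (Bad.card : ℝ) < 2 ^ (n * m) / 2 ^ t := by
    have hc1 : (Bad.card : ℝ) ≤ (m:ℝ) * (((2:ℝ) ^ k - 1) * ((2:ℝ) ^ n) ^ (m - 1)) := by
      have := hBadCard
      have hcast2 : ((m * ((2 ^ k - 1) * (2 ^ n) ^ (m - 1)) : ℕ) : ℝ)
          = (m:ℝ) * (((2:ℝ) ^ k - 1) * ((2:ℝ) ^ n) ^ (m - 1)) := by
        push_cast [h2k1]
        ring
      rw [← hcast2]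
      exact_mod_cast this
    have hmR : (m:ℝ) < (Bn:ℝ) := by exact_mod_cast hmBn
    have hp1 : (0:ℝ) < ((2:ℝ) ^ n) ^ (m - 1) := by positivity
    have hp2 : (0:ℝ) < (2:ℝ) ^ k := by positivity
    have hmR0 : (0:ℝ) ≤ (m:ℝ) := by positivity
    have hc2 : (m:ℝ) * (((2:ℝ) ^ k - 1) * ((2:ℝ) ^ n) ^ (m - 1))
        < ((Bn:ℝ) * 2 ^ k) * ((2:ℝ) ^ n) ^ (m - 1) := by
      have : (m:ℝ) * ((2:ℝ) ^ k - 1) < (Bn:ℝ) * 2 ^ k := by nlinarith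
      nlinarith
    have hc3 : ((Bn:ℝ) * 2 ^ k) * ((2:ℝ) ^ n) ^ (m - 1) ≤ (2 ^ n / 2 ^ t) * ((2:ℝ) ^ n) ^ (m - 1) := by
      have h2t : (0:ℝ) < 2 ^ t := by positivity
      have : (Bn:ℝ) * 2 ^ k ≤ 2 ^ n / 2 ^ t := by
        rw [le_div_iff₀ h2t]
        exact hkey
      nlinarith
    have hc4 : ((2:ℝ) ^ n / 2 ^ t) * ((2:ℝ) ^ n) ^ (m - 1) = 2 ^ (n * m) / 2 ^ t := by
      have hnm : n * m = n * (m - 1) + n := by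
        conv_lhs => rw [show m = m - 1 + 1 from (Nat.succ_pred_eq_of_pos hm).symm]
        ring
      rw [hnm, pow_add, pow_mul]
      ring
    linarith
  have hpos : (0:ℝ) < 2 ^ (n * m) := by positivity
  have h2t : (2:ℝ) ^ (-(t : ℤ)) = ((2:ℝ) ^ t)⁻¹ := by
    rw [zpow_neg, zpow_natCast]
  have hGoodR : (Good.card : ℝ) = 2 ^ (n * m) - Bad.card := by
    have : ((Good.card + Bad.card : ℕ) : ℝ) = ((2 ^ (n * m) : ℕ) : ℝ) := by
      exact_mod_cast congrArg (Nat.cast (R := ℝ)) hGB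
    push_cast at this
    linarith
  rw [hNat, hGoodR, h2t]
  rw [lt_div_iff₀ hpos]
  have hexp : (1 - ((2:ℝ) ^ t)⁻¹) * 2 ^ (n * m) = 2 ^ (n * m) - 2 ^ (n * m) / 2 ^ t := by
    field_simp
  rw [hexp]
  linarith
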